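/- Under the stated assumptions, if h ∈ (0, m_b ε), then there exists a constant C > 0, depending only on K, b, ε, l₀, r₀ and m_b (but not on h, b̂ or the probability space), such that ∫_{b(I_ε)} E(|𝔟̂_h⁻¹(w) − b⁻¹(w)|) dw ≤ C ( h + R(b̂)^{1/2} + R(b̂)/h ). -/

import Mathlib

open MeasureTheory

/-- The rescaled kernel `K_η(x) = η⁻¹ K(x/η)`. -/
noncomputable def Kh (K : ℝ → ℝ) (η x : ℝ) : ℝ := η⁻¹ * K (x / η)

/-- The estimator `𝔟̂_h⁻¹(w) = l₀ - 2ε + ∫_{I_{2ε}} ∫_{-∞}^{-w} K_h(-g(z) - y) dy dz`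
of the inverse of `b`, computed from an estimation `g` of `b`. -/
noncomputable def binvEst (K : ℝ → ℝ) (l₀ r₀ ε h : ℝ) (g : ℝ → ℝ) (w : ℝ) : ℝ :=
  (l₀ - 2 * ε) +
    ∫ z in Set.Icc (l₀ - 2 * ε) (r₀ + 2 * ε), ∫ y in Set.Iic (-w), Kh K h (-(g z) - y)

section Aux
open Set

variable {K : ℝ → ℝ} {h : ℝ}

lemma Kh_nonneg (hK0 : ∀ y, 0 ≤ K y) (x : ℝ) (hh : 0 < h) : 0 ≤ Kh K h x :=
  mul_nonneg (by positivity) (hK0 _)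

lemma Kh_eq_zero (hKsupp : ∀ y, 1 < |y| → K y = 0) (hh : 0 < h) {x : ℝ}
    (hx : h < |x|) : Kh K h x = 0 := by
  have : 1 < |x / h| := by
    rw [abs_div, abs_of_pos hh]
    exact (one_lt_div hh).2 hx
  simp [Kh, hKsupp _ this]

lemma Kh_continuous (hK2 : Continuous K) (hh : 0 < h) : Continuous (Kh K h) := by
  unfold Kh; fun_prop

lemma Kh_integrable (hK2 : Continuous K) (hKsupp : ∀ y, 1 < |y| → K y = 0) (hh : 0 < h) :
    Integrable (Kh K h) := by
  apply (Kh_continuous hK2 hh).integrable_of_hasCompactSupport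
  have hsub : Function.support (Kh K h) ⊆ Icc (-h) h := by
    intro x hx
    by_contra hxn
    apply hx
    apply Kh_eq_zero hKsupp hh
    rcases abs_cases x with ⟨h1, h2⟩ | ⟨h1, h2⟩ <;>
      simp only [mem_Icc, not_and_or, not_le] at hxn <;> cases hxn <;> linarith
  exact HasCompactSupport.of_support_subset_isCompact isCompact_Icc hsub

lemma Kh_integral (hKint : ∫ y, K y = 1) (hh : 0 < h) : ∫ x, Kh K h x = 1 := by
  unfold Kh
  rw [integral_const_mul, MeasureTheory.Measure.integral_comp_div K h, hKint]
  simp [abs_of_pos hh]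
  field_simp

/-- The smoothed step function `Φ t = ∫_{-∞}^t K_h`. -/
noncomputable def Phi (K : ℝ → ℝ) (h t : ℝ) : ℝ := ∫ x in Iic t, Kh K h x

lemma Phi_nonneg (hK0 : ∀ y, 0 ≤ K y) (hh : 0 < h) (t : ℝ) : 0 ≤ Phi K h t :=
  setIntegral_nonneg measurableSet_Iic fun x _ => mul_nonneg (by positivity) (hK0 _)

lemma Phi_mono (hK0 : ∀ y, 0 ≤ K y) (hK2 : Continuous K)
    (hKsupp : ∀ y, 1 < |y| → K y = 0) (hh : 0 < h) : Monotone (Phi K h) := by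
  intro s t hst
  exact setIntegral_mono_set (Kh_integrable hK2 hKsupp hh).integrableOn
    (Filter.Eventually.of_forall fun x => mul_nonneg (by positivity) (hK0 _))
    (Filter.Eventually.of_forall fun x hx => le_trans hx hst)

lemma Phi_le_one (hK0 : ∀ y, 0 ≤ K y) (hK2 : Continuous K)
    (hKsupp : ∀ y, 1 < |y| → K y = 0) (hKint : ∫ y, K y = 1) (hh : 0 < h) (t : ℝ) :
    Phi K h t ≤ 1 := by
  rw [← Kh_integral (K := K) hKint hh]
  exact setIntegral_le_integral (Kh_integrable hK2 hKsupp hh)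
    (Filter.Eventually.of_forall fun x => mul_nonneg (by positivity) (hK0 _))

lemma Phi_eq_one (hK2 : Continuous K) (hKsupp : ∀ y, 1 < |y| → K y = 0)
    (hKint : ∫ y, K y = 1) (hh : 0 < h) {t : ℝ} (ht : h ≤ t) : Phi K h t = 1 := by
  have hi := Kh_integrable hK2 hKsupp hh
  have h0 : ∫ x in Ioi t, Kh K h x = 0 :=
    setIntegral_eq_zero_of_forall_eq_zero fun x hx =>
      Kh_eq_zero hKsupp hh (lt_of_lt_of_le (lt_of_le_of_lt ht hx) (le_abs_self x))
  have := intervalIntegral.integral_Iic_add_Ioi (b := t) hi.integrableOn hi.integrableOn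
  rw [Kh_integral hKint hh, h0, add_zero] at this
  rw [Phi]; exact this

lemma Phi_eq_zero (hK2 : Continuous K) (hKsupp : ∀ y, 1 < |y| → K y = 0)
    (hh : 0 < h) {t : ℝ} (ht : t ≤ -h) : Phi K h t = 0 := by
  rw [Phi, setIntegral_congr_set (Iio_ae_eq_Iic (a := t)).symm]
  exact setIntegral_eq_zero_of_forall_eq_zero fun x hx => by
    apply Kh_eq_zero hKsupp hh
    have : x < -h := lt_of_lt_of_le hx ht
    rw [abs_of_neg (by linarith)]; linarith

lemma Phi_measurable (hK2 : Continuous K) (hK0 : ∀ y, 0 ≤ K y)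
    (hKsupp : ∀ y, 1 < |y| → K y = 0) (hh : 0 < h) : Measurable (Phi K h) :=
  (Phi_mono hK0 hK2 hKsupp hh).measurable

lemma inner_int (K : ℝ → ℝ) (hKsymm : ∀ y, K (-y) = K y) (h a w : ℝ) :
    ∫ y in Iic (-w), Kh K h (-a - y) = Phi K h (a - w) := by
  have hsym : ∀ u, Kh K h (-u) = Kh K h u := by
    intro u; unfold Kh; rw [neg_div, hKsymm]
  have h1 : ∀ y : ℝ, Kh K h (-a - y) = Kh K h (y + a) := by
    intro y
    rw [show -a - y = -(y + a) by ring, hsym]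
  simp_rw [h1]
  have hemb : MeasurableEmbedding (fun y : ℝ => y + a) :=
    (Homeomorph.addRight a).isClosedEmbedding.measurableEmbedding
  have hmp : MeasurePreserving (fun y : ℝ => y + a) volume volume :=
    measurePreserving_add_right volume a
  have hpre : (fun y : ℝ => y + a) ⁻¹' Iic (a - w) = Iic (-w) := by
    ext y; simp only [Set.mem_preimage, Set.mem_Iic]; constructor <;> intro <;> linarith
  have := hmp.setIntegral_preimage_emb hemb (Kh K h) (Iic (a - w))
  rw [hpre] at this
  rw [this, Phi]

lemma step1 {K : ℝ → ℝ} {h : ℝ} (hh : 0 < h)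
    (hPhi0 : ∀ t, t ≤ -h → Phi K h t = 0) (hPhi1 : ∀ t, h ≤ t → Phi K h t = 1)
    (hPhin : ∀ t, 0 ≤ Phi K h t) (hPhil : ∀ t, Phi K h t ≤ 1)
    (a c w : ℝ) :
    |Phi K h (a - w) - (if w ≤ c then 1 else 0)| ≤
      (if |a - w| ≤ h then 1 else 0) + (if (w - c) * (w - a) ≤ 0 then 1 else 0) := by
  rcases le_or_gt (|a - w|) h with hcase | hcase
  · have h1 := hPhin (a - w); have h2 := hPhil (a - w)
    rw [if_pos hcase]
    split_ifs <;> rw [abs_le] <;> constructor <;> linarith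
  · rcases abs_cases (a - w) with ⟨heq, _⟩ | ⟨heq, _⟩
    · have hgt : h < a - w := by rw [heq] at hcase; exact hcase
      rw [hPhi1 _ hgt.le]
      by_cases hwc : w ≤ c
      · rw [if_pos hwc]; simp only [sub_self, abs_zero]; positivity
      · rw [if_neg hwc]
        have : (w - c) * (w - a) ≤ 0 := by nlinarith [lt_of_not_ge hwc]
        rw [if_pos this]
        split_ifs <;> norm_num
    · have hlt : a - w < -h := by rw [heq] at hcase; linarith
      rw [hPhi0 _ hlt.le]
      by_cases hwc : w ≤ c
      · have : (w - c) * (w - a) ≤ 0 := by nlinarith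
        rw [if_pos hwc, if_pos this]
        split_ifs <;> norm_num
      · rw [if_neg hwc]; simp only [sub_zero, abs_zero]; positivity

lemma l2a (A B a h : ℝ) (hh : 0 < h) :
    ∫ w in Icc A B, (if |a - w| ≤ h then (1:ℝ) else 0) ≤ 2 * h := by
  have hset : ∀ w : ℝ, (if |a - w| ≤ h then (1:ℝ) else 0) =
      (Icc (a - h) (a + h)).indicator (fun _ => (1:ℝ)) w := by
    intro w
    rw [Set.indicator_apply]
    congr 1
    simp only [mem_Icc, eq_iff_iff, abs_le]
    constructor <;> intro ⟨h1, h2⟩ <;> constructor <;> linarith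
  simp_rw [hset]
  rw [setIntegral_indicator measurableSet_Icc, setIntegral_const, smul_eq_mul, mul_one]
  calc (volume (Icc A B ∩ Icc (a - h) (a + h))).toReal
      ≤ (volume (Icc (a - h) (a + h))).toReal := by
        apply ENNReal.toReal_mono
        · simp [Real.volume_Icc]
        · exact measure_mono inter_subset_right
    _ = 2 * h := by rw [Real.volume_Icc, ENNReal.toReal_ofReal (by linarith)]; ring

lemma l2b (A B a c : ℝ) :
    ∫ w in Icc A B, (if (w - c) * (w - a) ≤ 0 then (1:ℝ) else 0) ≤ |a - c| := by
  have hset : ∀ w : ℝ, (if (w - c) * (w - a) ≤ 0 then (1:ℝ) else 0) =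
      (Icc (min c a) (max c a)).indicator (fun _ => (1:ℝ)) w := by
    intro w
    rw [Set.indicator_apply]
    congr 1
    simp only [mem_Icc, eq_iff_iff]
    constructor
    · intro hle
      constructor
      · by_contra hw; push_neg at hw; rw [lt_min_iff] at hw
        exact absurd hle (by nlinarith [hw.1, hw.2])
      · by_contra hw; push_neg at hw; rw [max_lt_iff] at hw
        exact absurd hle (by nlinarith [hw.1, hw.2])
    · rintro ⟨h1, h2⟩
      rcases le_total c a with hca | hca
      · rw [min_eq_left hca] at h1; rw [max_eq_right hca] at h2; nlinarith
      · rw [min_eq_right hca] at h1; rw [max_eq_left hca] at h2; nlinarith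
  simp_rw [hset]
  rw [setIntegral_indicator measurableSet_Icc, setIntegral_const, smul_eq_mul, mul_one]
  calc (volume (Icc A B ∩ Icc (min c a) (max c a))).toReal
      ≤ (volume (Icc (min c a) (max c a))).toReal := by
        apply ENNReal.toReal_mono
        · simp [Real.volume_Icc]
        · exact measure_mono inter_subset_right
    _ = |a - c| := by
        rw [Real.volume_Icc, ENNReal.toReal_ofReal (by simp [min_le_max])]
        rcases le_total c a with hca | hca
        · rw [min_eq_left hca, max_eq_right hca, abs_of_nonneg (by linarith)]
        · rw [min_eq_right hca, max_eq_left hca, abs_of_nonpos (by linarith)]; ring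

lemma step0 (l₀ r₀ ε : ℝ) (b binv bm : ℝ → ℝ) (hε : 0 < ε) (hlr : l₀ < r₀)
    (hanti : StrictAntiOn b (Icc (l₀ - 2*ε) (r₀ + 2*ε)))
    (hbinv : ∀ x ∈ Icc (l₀ - 2*ε) (r₀ + 2*ε), binv (b x) = x)
    (hbm : ∀ z ∈ Icc (l₀ - 2*ε) (r₀ + 2*ε), bm z = b z)
    (hcont : ContinuousOn b (Icc (l₀ - ε) (r₀ + ε)))
    {w : ℝ} (hw : w ∈ Icc (b (r₀ + ε)) (b (l₀ - ε))) :
    ∫ z in Icc (l₀ - 2*ε) (r₀ + 2*ε), (if w ≤ bm z then (1:ℝ) else 0) =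
      binv w - (l₀ - 2*ε) := by
  have hle : l₀ - ε ≤ r₀ + ε := by linarith
  obtain ⟨x, hx, hbx⟩ := intermediate_value_Icc' hle hcont hw
  have hxI : x ∈ Icc (l₀ - 2*ε) (r₀ + 2*ε) :=
    ⟨by linarith [hx.1], by linarith [hx.2]⟩
  have hbinvw : binv w = x := by rw [← hbx, hbinv x hxI]
  have hkey : EqOn (fun z => if w ≤ bm z then (1:ℝ) else 0)
      ((Icc (l₀ - 2*ε) x).indicator (fun _ => (1:ℝ))) (Icc (l₀ - 2*ε) (r₀ + 2*ε)) := by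
    intro z hz
    have hiff : w ≤ bm z ↔ z ≤ x := by
      rw [hbm z hz, ← hbx]
      constructor
      · intro hbb
        by_contra hzx
        push_neg at hzx
        exact absurd hbb (not_le.2 (hanti hxI hz hzx))
      · intro hzx
        rcases eq_or_lt_of_le hzx with rfl | hlt
        · exact le_refl _
        · exact (hanti hz hxI hlt).le
    simp only [Set.indicator_apply, mem_Icc]
    by_cases hc : w ≤ bm z
    · rw [if_pos hc, if_pos ⟨hz.1, hiff.1 hc⟩]
    · rw [if_neg hc, if_neg (fun hmem => hc (hiff.2 hmem.2))]
  rw [setIntegral_congr_fun measurableSet_Icc hkey,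
    setIntegral_indicator measurableSet_Icc, setIntegral_const, smul_eq_mul, mul_one,
    hbinvw]
  have hinter : Icc (l₀ - 2*ε) (r₀ + 2*ε) ∩ Icc (l₀ - 2*ε) x = Icc (l₀ - 2*ε) x := by
    apply inter_eq_self_of_subset_right
    exact Icc_subset_Icc le_rfl hxI.2
  rw [hinter, measureReal_def, Real.volume_Icc, ENNReal.toReal_ofReal (by linarith [hxI.1])]

end Aux

set_option maxHeartbeats 1000000

/-- Proposition 2.1: `L¹`-risk bound for the inverse estimator `𝔟̂_h⁻¹`. -/
theorem stmt0 (l₀ r₀ ε mb : ℝ) (K b b' binv : ℝ → ℝ)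
    (hlr : l₀ < r₀) (hε : 0 < ε) (hε1 : ε ≤ 1) (hmb : 0 < mb)
    -- kernel assumptions
    (hK0 : ∀ y, 0 ≤ K y) (hK2 : ContDiff ℝ 2 K) (hKsymm : ∀ y, K (-y) = K y)
    (hKsupp : ∀ y, 1 < |y| → K y = 0) (hKint : ∫ y, K y = 1)
    -- `b` is continuously differentiable on `I_{2ε}` with `b' ≤ -mb` there
    (hbd : ∀ x ∈ Set.Icc (l₀ - 2 * ε) (r₀ + 2 * ε), HasDerivAt b (b' x) x)
    (hb'c : ContinuousOn b' (Set.Icc (l₀ - 2 * ε) (r₀ + 2 * ε)))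
    (hb'le : ∀ x ∈ Set.Icc (l₀ - 2 * ε) (r₀ + 2 * ε), b' x ≤ -mb)
    -- `binv` is the inverse of `b` on `I_{2ε}`
    (hbinv : ∀ x ∈ Set.Icc (l₀ - 2 * ε) (r₀ + 2 * ε), binv (b x) = x) :
    ∃ C > 0, ∀ (Ω : Type) [MeasurableSpace Ω] (P : Measure Ω) [IsProbabilityMeasure P]
      (bhat : Ω → ℝ → ℝ), Measurable (Function.uncurry bhat) →
      (∀ x ∈ Set.Icc (l₀ - 2 * ε) (r₀ + 2 * ε),
        Integrable (fun ω => |bhat ω x - b x| ^ 2) P) →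
      IntegrableOn (fun x => ∫ ω, |bhat ω x - b x| ^ 2 ∂P)
        (Set.Icc (l₀ - 2 * ε) (r₀ + 2 * ε)) →
      ∀ h : ℝ, 0 < h → h < mb * ε →
      (∫ w in Set.Icc (b (r₀ + ε)) (b (l₀ - ε)),
          ∫ ω, |binvEst K l₀ r₀ ε h (bhat ω) w - binv w| ∂P) ≤
        C * (h +
          Real.sqrt (∫ x in Set.Icc (l₀ - 2 * ε) (r₀ + 2 * ε),
            ∫ ω, |bhat ω x - b x| ^ 2 ∂P) +
          (∫ x in Set.Icc (l₀ - 2 * ε) (r₀ + 2 * ε),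
            ∫ ω, |bhat ω x - b x| ^ 2 ∂P) / h) := by
  have Kcont : Continuous K := hK2.continuous
  set I₂ : Set ℝ := Set.Icc (l₀ - 2 * ε) (r₀ + 2 * ε) with hI₂def
  have hI₂m : MeasurableSet I₂ := measurableSet_Icc
  have hIlt : l₀ - 2 * ε < r₀ + 2 * ε := by linarith
  set L : ℝ := r₀ - l₀ + 4 * ε with hLdef
  have hL : 0 < L := by simp only [hLdef]; linarith
  have hIvol : (volume I₂).toReal = L := by
    rw [hI₂def, Real.volume_Icc, ENNReal.toReal_ofReal (by linarith)]
    simp only [hLdef]; ring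
  haveI hIfin : IsFiniteMeasure (volume.restrict I₂) :=
    ⟨by rw [Measure.restrict_apply MeasurableSet.univ, Set.univ_inter, hI₂def]
        exact measure_Icc_lt_top⟩
  have hcontI : ContinuousOn b I₂ := fun x hx => (hbd x hx).continuousAt.continuousWithinAt
  have hanti : StrictAntiOn b I₂ := by
    apply strictAntiOn_of_deriv_neg (convex_Icc _ _) hcontI
    intro x hx
    rw [interior_Icc] at hx
    have hxI : x ∈ I₂ := by rw [hI₂def]; exact Set.Ioo_subset_Icc_self hx
    rw [(hbd x hxI).deriv]
    linarith [hb'le x hxI]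
  set bm : ℝ → ℝ := fun z => b (max (l₀ - 2 * ε) (min (r₀ + 2 * ε) z)) with hbmdef
  have hclampI : ∀ z : ℝ, max (l₀ - 2 * ε) (min (r₀ + 2 * ε) z) ∈ I₂ := fun z =>
    ⟨le_max_left _ _, max_le hIlt.le (min_le_left _ _)⟩
  have hclampc : Continuous (fun z : ℝ => max (l₀ - 2 * ε) (min (r₀ + 2 * ε) z)) := by
    fun_prop
  have hbmc : Continuous bm := by
    rw [continuous_iff_continuousAt]
    intro z
    show ContinuousAt (b ∘ fun z : ℝ => max (l₀ - 2 * ε) (min (r₀ + 2 * ε) z)) z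
    exact ContinuousAt.comp (g := b)
      (f := fun z : ℝ => max (l₀ - 2 * ε) (min (r₀ + 2 * ε) z))
      ((hbd _ (hclampI z)).continuousAt) hclampc.continuousAt
  have hbmeq : ∀ z ∈ I₂, bm z = b z := by
    intro z hz
    rw [hbmdef]
    simp only
    rw [min_eq_right hz.2, max_eq_right hz.1]
  refine ⟨3 * L + 1, by linarith, ?_⟩
  intro Ω instΩ P instP bhat hmeas hint1 hint2 h hh hhmb
  set J : Set ℝ := Set.Icc (b (r₀ + ε)) (b (l₀ - ε)) with hJdef
  have hJm : MeasurableSet J := measurableSet_Icc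
  haveI hJfin : IsFiniteMeasure (volume.restrict J) :=
    ⟨by rw [Measure.restrict_apply MeasurableSet.univ, Set.univ_inter, hJdef]
        exact measure_Icc_lt_top⟩
  set R : ℝ := ∫ x in I₂, ∫ ω, |bhat ω x - b x| ^ 2 ∂P with hRdef
  have hbhat : ∀ ω, Measurable (bhat ω) := fun ω => hmeas.of_uncurry_left
  -- Phi facts
  have hPhi0 : ∀ t, t ≤ -h → Phi K h t = 0 := fun t ht => Phi_eq_zero Kcont hKsupp hh ht
  have hPhi1 : ∀ t, h ≤ t → Phi K h t = 1 := fun t ht => Phi_eq_one Kcont hKsupp hKint hh ht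
  have hPhin : ∀ t, 0 ≤ Phi K h t := Phi_nonneg hK0 hh
  have hPhil : ∀ t, Phi K h t ≤ 1 := Phi_le_one hK0 Kcont hKsupp hKint hh
  have hPhim : Measurable (Phi K h) := Phi_measurable Kcont hK0 hKsupp hh
  -- rewrite the estimator
  have hEst : ∀ (g : ℝ → ℝ) (w : ℝ), binvEst K l₀ r₀ ε h g w
      = (l₀ - 2 * ε) + ∫ z in I₂, Phi K h (g z - w) := by
    intro g w
    unfold binvEst
    rw [hI₂def]
    congr 1
    exact setIntegral_congr_fun measurableSet_Icc fun z _ => inner_int K hKsymm h (g z) w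
  -- the indicator-difference function
  set q : Ω → ℝ → ℝ → ℝ := fun ω z w =>
    (if |bhat ω z - w| ≤ h then 1 else 0) +
    (if (w - bm z) * (w - bhat ω z) ≤ 0 then 1 else 0) with hqdef
  have hq_nonneg : ∀ ω z w, 0 ≤ q ω z w := by
    intro ω z w; rw [hqdef]; simp only; split_ifs <;> norm_num
  have hq_le : ∀ ω z w, q ω z w ≤ 2 := by
    intro ω z w; rw [hqdef]; simp only; split_ifs <;> norm_num
  -- joint measurability of q in all variables (in the ordering used below)
  have hf1 : Measurable (fun t : ℝ => if |t| ≤ h then (1:ℝ) else 0) := by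
    apply Measurable.ite _ measurable_const measurable_const
    exact measurableSet_le continuous_abs.measurable measurable_const
  have hf2 : Measurable (fun p : ℝ × ℝ => if p.1 * p.2 ≤ 0 then (1:ℝ) else 0) := by
    apply Measurable.ite _ measurable_const measurable_const
    exact measurableSet_le (measurable_fst.mul measurable_snd) measurable_const
  -- integrability in z
  have hqm : Measurable (fun p : Ω × ℝ × ℝ => q p.1 p.2.1 p.2.2) := by
    simp only [hqdef]
    have hbb : Measurable (fun p : Ω × ℝ × ℝ => bhat p.1 p.2.1) :=
      hmeas.comp (measurable_fst.prodMk measurable_snd.fst)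
    have hww : Measurable (fun p : Ω × ℝ × ℝ => p.2.2) := measurable_snd.snd
    have hbmz : Measurable (fun p : Ω × ℝ × ℝ => bm p.2.1) :=
      hbmc.measurable.comp measurable_snd.fst
    exact (hf1.comp (hbb.sub hww)).add
      (hf2.comp ((hww.sub hbmz).prodMk (hww.sub hbb)))
  have hqint_z : ∀ ω w, IntegrableOn (fun z => q ω z w) I₂ := by
    intro ω w
    apply Integrable.mono' (integrable_const (2:ℝ))
    · exact (hqm.comp (measurable_const.prodMk
        (measurable_id.prodMk measurable_const))).aestronglyMeasurable
    · exact Filter.Eventually.of_forall fun z => by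
        rw [Real.norm_eq_abs, abs_of_nonneg (hq_nonneg ω z w)]; exact hq_le ω z w
  have hIq_nonneg : ∀ ω w, 0 ≤ ∫ z in I₂, q ω z w :=
    fun ω w => setIntegral_nonneg hI₂m fun z _ => hq_nonneg ω z w
  have hIq_le : ∀ ω w, ∫ z in I₂, q ω z w ≤ 2 * L := by
    intro ω w
    calc ∫ z in I₂, q ω z w ≤ ∫ _ in I₂, (2:ℝ) :=
          setIntegral_mono_on (hqint_z ω w) (integrable_const _) hI₂m fun z _ => hq_le ω z w
      _ = 2 * L := by rw [setIntegral_const, measureReal_def, hIvol, smul_eq_mul]; ring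
  -- step A
  have hJsub : Set.Icc (l₀ - ε) (r₀ + ε) ⊆ I₂ := Set.Icc_subset_Icc (by linarith) (by linarith)
  have stepA : ∀ w ∈ J, ∀ ω, |binvEst K l₀ r₀ ε h (bhat ω) w - binv w| ≤ ∫ z in I₂, q ω z w := by
    intro w hw ω
    have h0 := step0 l₀ r₀ ε b binv bm hε hlr hanti hbinv hbmeq (hcontI.mono hJsub) hw
    have hintPhi : IntegrableOn (fun z => Phi K h (bhat ω z - w)) I₂ := by
      apply Integrable.mono' (integrable_const (1:ℝ))
      · exact (hPhim.comp ((hbhat ω).sub measurable_const)).aestronglyMeasurable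
      · exact Filter.Eventually.of_forall fun z => by
          rw [Real.norm_eq_abs, abs_of_nonneg (hPhin _)]; exact hPhil _
    have hintInd : IntegrableOn (fun z => if w ≤ bm z then (1:ℝ) else 0) I₂ := by
      apply Integrable.mono' (integrable_const (1:ℝ))
      · exact (Measurable.ite (measurableSet_le measurable_const hbmc.measurable)
          measurable_const measurable_const).aestronglyMeasurable
      · exact Filter.Eventually.of_forall fun z => by
          split_ifs <;> simp
    have heq : binvEst K l₀ r₀ ε h (bhat ω) w - binv w
        = ∫ z in I₂, (Phi K h (bhat ω z - w) - if w ≤ bm z then (1:ℝ) else 0) := by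
      rw [integral_sub hintPhi hintInd, hEst]
      linarith [h0]
    rw [heq]
    calc |∫ z in I₂, (Phi K h (bhat ω z - w) - if w ≤ bm z then (1:ℝ) else 0)|
        ≤ ∫ z in I₂, |Phi K h (bhat ω z - w) - if w ≤ bm z then (1:ℝ) else 0| := by
          simpa [Real.norm_eq_abs] using
            norm_integral_le_integral_norm (μ := volume.restrict I₂)
              (f := fun z => Phi K h (bhat ω z - w) - if w ≤ bm z then (1:ℝ) else 0)
      _ ≤ ∫ z in I₂, q ω z w := by
          apply integral_mono_of_nonneg
            (Filter.Eventually.of_forall fun z => abs_nonneg _) (hqint_z ω w)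
          refine Filter.Eventually.of_forall fun z => ?_
          simp only [hqdef]
          exact step1 hh hPhi0 hPhi1 hPhin hPhil (bhat ω z) (bm z) w
  -- step E : the w-integral bound
  have stepE : ∀ ω z, ∫ w in J, q ω z w ≤ 5*h/2 + (bhat ω z - bm z)^2/(2*h) := by
    intro ω z
    have hi1 : IntegrableOn (fun w => if |bhat ω z - w| ≤ h then (1:ℝ) else 0) J := by
      apply Integrable.mono' (integrable_const (1:ℝ))
      · exact (hf1.comp (measurable_const.sub measurable_id)).aestronglyMeasurable
      · exact Filter.Eventually.of_forall fun w => by split_ifs <;> simp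
    have hi2 : IntegrableOn (fun w => if (w - bm z) * (w - bhat ω z) ≤ 0 then (1:ℝ) else 0) J := by
      apply Integrable.mono' (integrable_const (1:ℝ))
      · exact (hf2.comp ((measurable_id.sub measurable_const).prodMk
          (measurable_id.sub measurable_const))).aestronglyMeasurable
      · exact Filter.Eventually.of_forall fun w => by split_ifs <;> simp
    have hsplit : ∫ w in J, q ω z w =
        (∫ w in J, if |bhat ω z - w| ≤ h then (1:ℝ) else 0) +
        (∫ w in J, if (w - bm z) * (w - bhat ω z) ≤ 0 then (1:ℝ) else 0) := by
      simp only [hqdef]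
      exact integral_add hi1 hi2
    have hamgm : |bhat ω z - bm z| ≤ h/2 + (bhat ω z - bm z)^2/(2*h) := by
      have h2h : (0:ℝ) < 2*h := by linarith
      have key : 2*h*|bhat ω z - bm z| ≤ h*h + (bhat ω z - bm z)^2 := by
        nlinarith [sq_nonneg (|bhat ω z - bm z| - h), sq_abs (bhat ω z - bm z)]
      calc |bhat ω z - bm z| = (2*h*|bhat ω z - bm z|)/(2*h) := by field_simp
        _ ≤ (h*h + (bhat ω z - bm z)^2)/(2*h) := (div_le_div_iff_of_pos_right h2h).2 key
        _ = h/2 + (bhat ω z - bm z)^2/(2*h) := by field_simp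
    have h1 := l2a (b (r₀ + ε)) (b (l₀ - ε)) (bhat ω z) h hh
    have h2 := l2b (b (r₀ + ε)) (b (l₀ - ε)) (bhat ω z) (bm z)
    rw [hsplit, hJdef]
    have habs : |bhat ω z - bm z| = |bm z - bhat ω z| := abs_sub_comm _ _
    linarith [h1, h2, hamgm]
  -- step F : the ω-integral bound
  have stepF : ∀ z ∈ I₂, (∫ ω, (∫ w in J, q ω z w) ∂P)
      ≤ 5*h/2 + (∫ ω, |bhat ω z - b z|^2 ∂P)/(2*h) := by
    intro z hz
    have hbound : ∀ ω, (∫ w in J, q ω z w) ≤ 5*h/2 + |bhat ω z - b z|^2/(2*h) := by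
      intro ω
      have hE := stepE ω z
      rw [hbmeq z hz] at hE
      calc (∫ w in J, q ω z w) ≤ 5*h/2 + (bhat ω z - b z)^2/(2*h) := hE
        _ = 5*h/2 + |bhat ω z - b z|^2/(2*h) := by rw [sq_abs]
    calc ∫ ω, (∫ w in J, q ω z w) ∂P
        ≤ ∫ ω, (5*h/2 + |bhat ω z - b z|^2/(2*h)) ∂P := by
          apply integral_mono_of_nonneg
            (Filter.Eventually.of_forall fun ω => setIntegral_nonneg hJm fun w _ => hq_nonneg ω z w)
            ((integrable_const _).add ((hint1 z hz).div_const _))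
            (Filter.Eventually.of_forall hbound)
      _ = 5*h/2 + (∫ ω, |bhat ω z - b z|^2 ∂P)/(2*h) := by
          rw [integral_add (integrable_const _) ((hint1 z hz).div_const _),
            integral_const, integral_div]
          simp [measure_univ]
  -- parametric measurability
  have hSMc : StronglyMeasurable (fun p : (ℝ × Ω) × ℝ => q p.1.2 p.2 p.1.1) :=
    (hqm.comp ((measurable_fst.snd).prodMk
      (measurable_snd.prodMk measurable_fst.fst))).stronglyMeasurable
  have hG_meas : StronglyMeasurable (fun p : ℝ × Ω => ∫ z in I₂, q p.2 z p.1) :=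
    hSMc.integral_prod_right'
  have hG2_meas : StronglyMeasurable (fun w : ℝ => ∫ ω, (∫ z in I₂, q ω z w) ∂P) :=
    hG_meas.integral_prod_right'
  have hqintω : ∀ w, Integrable (fun ω => ∫ z in I₂, q ω z w) P := by
    intro w
    apply Integrable.mono' (integrable_const (2*L))
    · exact ((hqm.comp (measurable_fst.prodMk
        (measurable_snd.prodMk measurable_const))).stronglyMeasurable.integral_prod_right'
        ).aestronglyMeasurable
    · exact Filter.Eventually.of_forall fun ω => by
        rw [Real.norm_eq_abs, abs_of_nonneg (hIq_nonneg ω w)]; exact hIq_le ω w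
  have hGint : IntegrableOn (fun w => ∫ ω, (∫ z in I₂, q ω z w) ∂P) J := by
    apply Integrable.mono' (integrable_const (2*L))
    · exact hG2_meas.aestronglyMeasurable.restrict
    · refine Filter.Eventually.of_forall fun w => ?_
      rw [Real.norm_eq_abs, abs_of_nonneg (integral_nonneg fun ω => hIq_nonneg ω w)]
      calc ∫ ω, (∫ z in I₂, q ω z w) ∂P ≤ ∫ _, (2*L:ℝ) ∂P :=
            integral_mono_of_nonneg (Filter.Eventually.of_forall fun ω => hIq_nonneg ω w)
              (integrable_const _) (Filter.Eventually.of_forall fun ω => hIq_le ω w)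
        _ = 2*L := by simp [measure_univ]
  have stepBC : (∫ w in J, ∫ ω, |binvEst K l₀ r₀ ε h (bhat ω) w - binv w| ∂P)
      ≤ ∫ w in J, ∫ ω, (∫ z in I₂, q ω z w) ∂P := by
    apply integral_mono_of_nonneg
      (Filter.Eventually.of_forall fun w => integral_nonneg fun ω => abs_nonneg _) hGint
    refine (ae_restrict_iff' hJm).2 (Filter.Eventually.of_forall fun w hw => ?_)
    exact integral_mono_of_nonneg (Filter.Eventually.of_forall fun ω => abs_nonneg _)
      (hqintω w) (Filter.Eventually.of_forall fun ω => stepA w hw ω)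
  -- Fubini swaps
  have hswap1 : ∀ w, (∫ ω, (∫ z in I₂, q ω z w) ∂P) = ∫ z in I₂, (∫ ω, q ω z w ∂P) := by
    intro w
    apply integral_integral_swap
    apply Integrable.mono' (integrable_const (2:ℝ))
    · exact (hqm.comp (measurable_fst.prodMk
        (measurable_snd.prodMk measurable_const))).aestronglyMeasurable
    · refine Filter.Eventually.of_forall fun p => ?_
      simp only [Function.uncurry]
      rw [Real.norm_eq_abs, abs_of_nonneg (hq_nonneg _ _ _)]
      exact hq_le _ _ _
  have hswap3 : ∀ z, (∫ w in J, ∫ ω, q ω z w ∂P) = ∫ ω, (∫ w in J, q ω z w) ∂P := by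
    intro z
    apply integral_integral_swap (f := fun w ω => q ω z w)
    apply Integrable.mono' (integrable_const (2:ℝ))
    · exact (hqm.comp (measurable_snd.prodMk
        (measurable_const.prodMk measurable_fst))).aestronglyMeasurable
    · refine Filter.Eventually.of_forall fun p => ?_
      simp only [Function.uncurry]
      rw [Real.norm_eq_abs, abs_of_nonneg (hq_nonneg _ _ _)]
      exact hq_le _ _ _
  have hswap2 : (∫ w in J, ∫ z in I₂, (∫ ω, q ω z w ∂P))
      = ∫ z in I₂, (∫ w in J, ∫ ω, q ω z w ∂P) := by
    apply integral_integral_swap (f := fun w z => ∫ ω, q ω z w ∂P)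
    apply Integrable.mono' (integrable_const (2:ℝ))
    · exact ((hqm.comp (measurable_snd.prodMk ((measurable_fst.snd).prodMk
        measurable_fst.fst))).stronglyMeasurable.integral_prod_right').aestronglyMeasurable
    · refine Filter.Eventually.of_forall fun p => ?_
      simp only [Function.uncurry]
      rw [Real.norm_eq_abs, abs_of_nonneg (integral_nonneg fun ω => hq_nonneg ω p.2 p.1)]
      calc ∫ ω, q ω p.2 p.1 ∂P ≤ ∫ _, (2:ℝ) ∂P :=
            integral_mono_of_nonneg (Filter.Eventually.of_forall fun ω => hq_nonneg ω p.2 p.1)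
              (integrable_const _) (Filter.Eventually.of_forall fun ω => hq_le ω p.2 p.1)
        _ = 2 := by simp [measure_univ]
  -- final chain
  have hRnn : 0 ≤ R := setIntegral_nonneg hI₂m fun z _ => integral_nonneg fun ω => by positivity
  calc (∫ w in J, ∫ ω, |binvEst K l₀ r₀ ε h (bhat ω) w - binv w| ∂P)
      ≤ ∫ w in J, ∫ ω, (∫ z in I₂, q ω z w) ∂P := stepBC
    _ = ∫ w in J, ∫ z in I₂, (∫ ω, q ω z w ∂P) := by simp_rw [hswap1]
    _ = ∫ z in I₂, (∫ w in J, ∫ ω, q ω z w ∂P) := hswap2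
    _ = ∫ z in I₂, (∫ ω, (∫ w in J, q ω z w) ∂P) := by simp_rw [hswap3]
    _ ≤ ∫ z in I₂, (5*h/2 + (∫ ω, |bhat ω z - b z|^2 ∂P)/(2*h)) := by
        apply integral_mono_of_nonneg
          (Filter.Eventually.of_forall fun z => integral_nonneg fun ω =>
            setIntegral_nonneg hJm fun w _ => hq_nonneg ω z w)
          ((integrable_const _).add (hint2.div_const _))
        exact (ae_restrict_iff' hI₂m).2 (Filter.Eventually.of_forall fun z hz => stepF z hz)
    _ = 5*h/2*L + R/(2*h) := by
        rw [integral_add (integrable_const _) (hint2.div_const _), setIntegral_const,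
          integral_div, measureReal_def, hIvol, smul_eq_mul, hRdef]
        ring
    _ ≤ (3*L+1) * (h + Real.sqrt R + R/h) := by
        have hs := Real.sqrt_nonneg R
        have hd : 0 ≤ R/h := div_nonneg hRnn hh.le
        have hhalf : R/(2*h) = (R/h)/2 := by rw [div_div, mul_comm]
        nlinarith [mul_nonneg hL.le hh.le, mul_nonneg hL.le hs, mul_nonneg hL.le hd, hh.le]
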